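/- (Tensor product rule) For j = 1, 2 let H_j be a (q_j, η_j, ε_j)-embedding of A_j with unitary transformation U_j and embedding subspace S_j. Then H = H_1 ⊗ H_2 is a (q_1 + q_2, η_1 + η_2, ‖A_1‖ ε_2 + ‖A_2‖ ε_1 + ε_1 ε_2)-embedding of A = A_1 ⊗ A_2, with unitary transformation U = U_1 ⊗ U_2 and embedding subspace S = S_1 ⊗ S_2 (whose orthogonal projection is P_{S_1} ⊗ P_{S_2}). -/

import Mathlib

open Matrix
open scoped Matrix.Norms.L2Operator Kronecker

section Aux

lemma euclidean_norm_sq_eq' {ι : Type*} [Fintype ι] (y : EuclideanSpace ℂ ι) :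
    ‖y‖ ^ 2 = ∑ i, ‖y i‖ ^ 2 := by
  rw [EuclideanSpace.norm_eq, Real.sq_sqrt (Finset.sum_nonneg fun _ _ => sq_nonneg _)]

lemma l2_opNorm_kron_one {n m : Type*} [Fintype n] [DecidableEq n] [Fintype m] [DecidableEq m]
    (A : Matrix n n ℂ) : ‖A ⊗ₖ (1 : Matrix m m ℂ)‖ ≤ ‖A‖ := by
  rw [Matrix.l2_opNorm_def]
  refine ContinuousLinearMap.opNorm_le_bound _ (norm_nonneg _) fun x => ?_
  have hcol : ∀ (i : n) (j : m),
      (Matrix.toEuclideanLin (A ⊗ₖ (1 : Matrix m m ℂ)) x) (i, j)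
        = (A *ᵥ fun i' => x (i', j)) i := by
    intro i j
    show ((A ⊗ₖ (1 : Matrix m m ℂ)) *ᵥ (WithLp.equiv 2 _ x)) (i, j) = _
    simp [Matrix.mulVec, dotProduct, Matrix.one_apply, Fintype.sum_prod_type, mul_ite, ite_mul,
      Finset.sum_ite_eq', mul_comm]
  have hnn : (0:ℝ) ≤ ‖A‖ * ‖x‖ := mul_nonneg (norm_nonneg _) (norm_nonneg _)
  rw [EuclideanSpace.norm_eq, ← Real.sqrt_sq hnn]
  apply Real.sqrt_le_sqrt
  rw [mul_pow, euclidean_norm_sq_eq' x, Fintype.sum_prod_type_right, Finset.mul_sum,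
    Fintype.sum_prod_type_right]
  refine Finset.sum_le_sum fun j _ => ?_
  have h3 : ∑ i, ‖(A *ᵥ fun i' => x (i', j)) i‖ ^ 2 ≤ ‖A‖ ^ 2 * ∑ i, ‖x (i, j)‖ ^ 2 := by
    set v : EuclideanSpace ℂ n := (WithLp.equiv 2 _).symm (fun i => x (i, j)) with hv
    have h1 : ‖(EuclideanSpace.equiv n ℂ).symm (A *ᵥ v)‖ ≤ ‖A‖ * ‖v‖ := A.l2_opNorm_mulVec v
    have h2 := pow_le_pow_left₀ (norm_nonneg _) h1 2
    rw [mul_pow, euclidean_norm_sq_eq', euclidean_norm_sq_eq'] at h2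
    convert h2 using 3 <;> rfl
  simp only [LinearEquiv.trans_apply, LinearMap.coe_toContinuousLinearMap', hcol]
  calc ∑ i, ‖(A *ᵥ fun i' => x (i', j)) i‖ ^ 2
      ≤ ‖A‖ ^ 2 * ∑ i, ‖x (i, j)‖ ^ 2 := h3
    _ = ∑ i, ‖A‖ ^ 2 * ‖x (i, j)‖ ^ 2 := Finset.mul_sum _ _ _

lemma l2_opNorm_one_kron {n m : Type*} [Fintype n] [DecidableEq n] [Fintype m] [DecidableEq m]
    (B : Matrix m m ℂ) : ‖(1 : Matrix n n ℂ) ⊗ₖ B‖ ≤ ‖B‖ := by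
  rw [Matrix.l2_opNorm_def]
  refine ContinuousLinearMap.opNorm_le_bound _ (norm_nonneg _) fun x => ?_
  have hcol : ∀ (i : n) (j : m),
      (Matrix.toEuclideanLin ((1 : Matrix n n ℂ) ⊗ₖ B) x) (i, j)
        = (B *ᵥ fun j' => x (i, j')) j := by
    intro i j
    show (((1 : Matrix n n ℂ) ⊗ₖ B) *ᵥ (WithLp.equiv 2 _ x)) (i, j) = _
    simp [Matrix.mulVec, dotProduct, Matrix.one_apply, Fintype.sum_prod_type, mul_ite, ite_mul,
      Finset.sum_ite_eq', mul_comm]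
  have hnn : (0:ℝ) ≤ ‖B‖ * ‖x‖ := mul_nonneg (norm_nonneg _) (norm_nonneg _)
  rw [EuclideanSpace.norm_eq, ← Real.sqrt_sq hnn]
  apply Real.sqrt_le_sqrt
  rw [mul_pow, euclidean_norm_sq_eq' x, Fintype.sum_prod_type, Finset.mul_sum,
    Fintype.sum_prod_type]
  refine Finset.sum_le_sum fun i _ => ?_
  have h3 : ∑ j, ‖(B *ᵥ fun j' => x (i, j')) j‖ ^ 2 ≤ ‖B‖ ^ 2 * ∑ j, ‖x (i, j)‖ ^ 2 := by
    set v : EuclideanSpace ℂ m := (WithLp.equiv 2 _).symm (fun j => x (i, j)) with hv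
    have h1 : ‖(EuclideanSpace.equiv m ℂ).symm (B *ᵥ v)‖ ≤ ‖B‖ * ‖v‖ := B.l2_opNorm_mulVec v
    have h2 := pow_le_pow_left₀ (norm_nonneg _) h1 2
    rw [mul_pow, euclidean_norm_sq_eq', euclidean_norm_sq_eq'] at h2
    convert h2 using 3 <;> rfl
  simp only [LinearEquiv.trans_apply, LinearMap.coe_toContinuousLinearMap', hcol]
  calc ∑ j, ‖(B *ᵥ fun j' => x (i, j')) j‖ ^ 2
      ≤ ‖B‖ ^ 2 * ∑ j, ‖x (i, j)‖ ^ 2 := h3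
    _ = ∑ j, ‖B‖ ^ 2 * ‖x (i, j)‖ ^ 2 := Finset.mul_sum _ _ _

lemma l2_opNorm_kron {n m : Type*} [Fintype n] [DecidableEq n] [Fintype m] [DecidableEq m]
    (A : Matrix n n ℂ) (B : Matrix m m ℂ) : ‖A ⊗ₖ B‖ ≤ ‖A‖ * ‖B‖ := by
  have h : A ⊗ₖ B = (A ⊗ₖ (1 : Matrix m m ℂ)) * ((1 : Matrix n n ℂ) ⊗ₖ B) := by
    rw [← Matrix.mul_kronecker_mul, mul_one, one_mul]
  calc ‖A ⊗ₖ B‖ ≤ ‖A ⊗ₖ (1 : Matrix m m ℂ)‖ * ‖(1 : Matrix n n ℂ) ⊗ₖ B‖ := by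
        rw [h]; exact Matrix.l2_opNorm_mul _ _
    _ ≤ ‖A‖ * ‖B‖ := mul_le_mul (l2_opNorm_kron_one A) (l2_opNorm_one_kron B)
        (norm_nonneg _) (norm_nonneg _)

lemma kron_conjTranspose {n m : Type*} [Fintype n] [Fintype m]
    (A : Matrix n n ℂ) (B : Matrix m m ℂ) : (A ⊗ₖ B)ᴴ = Aᴴ ⊗ₖ Bᴴ := by
  ext ⟨i, j⟩ ⟨i', j'⟩
  simp [Matrix.conjTranspose_apply, mul_comm]

end Aux

/-- `H` is an `(η, ε)`-embedding of `A` with embedding subspace given by the orthogonal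
projection `PS`, witnessed by the unitary `U`. -/
def IsHamiltonianEmbedding {n : Type*} [Fintype n] [DecidableEq n]
    (PS U H A : Matrix n n ℂ) (η ε : ℝ) : Prop :=
  U ∈ Matrix.unitaryGroup n ℂ ∧
  PS * (Uᴴ * H * U) * (1 - PS) = 0 ∧
  ‖(1 : Matrix n n ℂ) - U‖ ≤ η ∧
  ‖PS * (Uᴴ * H * U) * PS - A‖ ≤ ε

/-- **Tensor product rule for Hamiltonian embeddings.** If `Hⱼ` is a `(qⱼ, ηⱼ, εⱼ)`-embedding of
`Aⱼ` with unitary `Uⱼ` and subspace projection `Pⱼ` (j = 1,2), then `H₁ ⊗ H₂` is a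
`(q₁ + q₂, η₁ + η₂, ‖A₁‖ε₂ + ‖A₂‖ε₁ + ε₁ε₂)`-embedding of `A₁ ⊗ A₂` with unitary `U₁ ⊗ U₂` and
subspace projection `P₁ ⊗ P₂`. -/
theorem embedding_tensor_rule (q₁ q₂ : ℕ) (η₁ η₂ ε₁ ε₂ : ℝ)
    (hη₁ : 0 < η₁) (hη₂ : 0 < η₂) (hε₁ : 0 < ε₁) (hε₂ : 0 < ε₂)
    (PS₁ U₁ H₁ A₁ : Matrix (Fin (2 ^ q₁)) (Fin (2 ^ q₁)) ℂ)
    (PS₂ U₂ H₂ A₂ : Matrix (Fin (2 ^ q₂)) (Fin (2 ^ q₂)) ℂ)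
    (hPS₁herm : PS₁.IsHermitian) (hPS₁proj : PS₁ * PS₁ = PS₁)
    (hPS₂herm : PS₂.IsHermitian) (hPS₂proj : PS₂ * PS₂ = PS₂)
    (hH₁ : H₁.IsHermitian) (hH₂ : H₂.IsHermitian)
    (hA₁ : A₁.IsHermitian) (hA₂ : A₂.IsHermitian)
    (hA₁S : A₁ = PS₁ * A₁ * PS₁) (hA₂S : A₂ = PS₂ * A₂ * PS₂)
    (h₁ : IsHamiltonianEmbedding PS₁ U₁ H₁ A₁ η₁ ε₁)
    (h₂ : IsHamiltonianEmbedding PS₂ U₂ H₂ A₂ η₂ ε₂) :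
    IsHamiltonianEmbedding (PS₁ ⊗ₖ PS₂) (U₁ ⊗ₖ U₂) (H₁ ⊗ₖ H₂) (A₁ ⊗ₖ A₂)
      (η₁ + η₂) (‖A₁‖ * ε₂ + ‖A₂‖ * ε₁ + ε₁ * ε₂) := by
  obtain ⟨hU₁, hP₁, hN₁, hE₁⟩ := h₁
  obtain ⟨hU₂, hP₂, hN₂, hE₂⟩ := h₂
  -- conjugated Hamiltonians
  set M₁ := U₁ᴴ * H₁ * U₁ with hM₁
  set M₂ := U₂ᴴ * H₂ * U₂ with hM₂
  have hMkron : (U₁ ⊗ₖ U₂)ᴴ * (H₁ ⊗ₖ H₂) * (U₁ ⊗ₖ U₂) = M₁ ⊗ₖ M₂ := by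
    rw [kron_conjTranspose, ← Matrix.mul_kronecker_mul, ← Matrix.mul_kronecker_mul]
  -- off-diagonal vanishing data
  have hPM₁ : PS₁ * M₁ * PS₁ = PS₁ * M₁ := by
    have := hP₁
    rw [mul_sub, mul_one, sub_eq_zero] at this
    exact (this.symm)
  have hPM₂ : PS₂ * M₂ * PS₂ = PS₂ * M₂ := by
    have := hP₂
    rw [mul_sub, mul_one, sub_eq_zero] at this
    exact (this.symm)
  refine ⟨?_, ?_, ?_, ?_⟩
  · -- unitarity
    rw [Matrix.mem_unitaryGroup_iff]
    have h1 : U₁ * star U₁ = 1 := Matrix.mem_unitaryGroup_iff.mp hU₁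
    have h2 : U₂ * star U₂ = 1 := Matrix.mem_unitaryGroup_iff.mp hU₂
    show (U₁ ⊗ₖ U₂) * star (U₁ ⊗ₖ U₂) = 1
    rw [Matrix.star_eq_conjTranspose, kron_conjTranspose, ← Matrix.mul_kronecker_mul,
      ← Matrix.star_eq_conjTranspose, ← Matrix.star_eq_conjTranspose, h1, h2,
      Matrix.one_kronecker_one]
  · -- off-diagonal block vanishes
    rw [hMkron, mul_sub, mul_one]
    rw [← Matrix.mul_kronecker_mul, ← Matrix.mul_kronecker_mul, hPM₁, hPM₂]
    exact sub_self _
  · -- closeness of the unitary to the identity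
    have hsplit : (1 : Matrix (Fin (2 ^ q₁) × Fin (2 ^ q₂)) _ ℂ) - U₁ ⊗ₖ U₂
        = ((1 : Matrix (Fin (2 ^ q₁)) (Fin (2 ^ q₁)) ℂ) - U₁) ⊗ₖ U₂
          + (1 : Matrix (Fin (2 ^ q₁)) (Fin (2 ^ q₁)) ℂ) ⊗ₖ
            ((1 : Matrix (Fin (2 ^ q₂)) (Fin (2 ^ q₂)) ℂ) - U₂) := by
      ext ⟨i, j⟩ ⟨i', j'⟩
      simp [Matrix.kroneckerMap_apply, Matrix.one_apply, Matrix.sub_apply]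
      ring_nf
      by_cases h : i = i' <;> by_cases h' : j = j' <;> simp [h, h'] <;> ring
    have hU₂n : ‖U₂‖ = 1 := CStarRing.norm_of_mem_unitary hU₂
    calc ‖(1 : Matrix (Fin (2 ^ q₁) × Fin (2 ^ q₂)) _ ℂ) - U₁ ⊗ₖ U₂‖
        ≤ ‖((1 : Matrix (Fin (2 ^ q₁)) (Fin (2 ^ q₁)) ℂ) - U₁) ⊗ₖ U₂‖
          + ‖(1 : Matrix (Fin (2 ^ q₁)) (Fin (2 ^ q₁)) ℂ) ⊗ₖ
              ((1 : Matrix (Fin (2 ^ q₂)) (Fin (2 ^ q₂)) ℂ) - U₂)‖ := by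
          rw [hsplit]; exact norm_add_le _ _
      _ ≤ η₁ + η₂ := by
          have t1 : ‖((1 : Matrix (Fin (2 ^ q₁)) (Fin (2 ^ q₁)) ℂ) - U₁) ⊗ₖ U₂‖ ≤ η₁ := by
            calc _ ≤ ‖(1 : Matrix (Fin (2 ^ q₁)) (Fin (2 ^ q₁)) ℂ) - U₁‖ * ‖U₂‖ :=
                  l2_opNorm_kron _ _
              _ = ‖(1 : Matrix (Fin (2 ^ q₁)) (Fin (2 ^ q₁)) ℂ) - U₁‖ := by
                  rw [hU₂n, mul_one]
              _ ≤ η₁ := hN₁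
          have t2 : ‖(1 : Matrix (Fin (2 ^ q₁)) (Fin (2 ^ q₁)) ℂ) ⊗ₖ
              ((1 : Matrix (Fin (2 ^ q₂)) (Fin (2 ^ q₂)) ℂ) - U₂)‖ ≤ η₂ :=
            le_trans (l2_opNorm_one_kron _) hN₂
          exact add_le_add t1 t2
  · -- approximation bound
    rw [hMkron]
    set B₁ := PS₁ * M₁ * PS₁ with hB₁
    set B₂ := PS₂ * M₂ * PS₂ with hB₂
    have hMB : (PS₁ ⊗ₖ PS₂) * (M₁ ⊗ₖ M₂) * (PS₁ ⊗ₖ PS₂) = B₁ ⊗ₖ B₂ := by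
      rw [← Matrix.mul_kronecker_mul, ← Matrix.mul_kronecker_mul]
    rw [hMB]
    have hsplit : B₁ ⊗ₖ B₂ - A₁ ⊗ₖ A₂ = (B₁ - A₁) ⊗ₖ B₂ + A₁ ⊗ₖ (B₂ - A₂) := by
      ext ⟨i, j⟩ ⟨i', j'⟩
      simp [Matrix.kroneckerMap_apply, Matrix.sub_apply, Matrix.add_apply]
      ring
    have hB₂n : ‖B₂‖ ≤ ‖A₂‖ + ε₂ := by
      calc ‖B₂‖ = ‖(B₂ - A₂) + A₂‖ := by rw [sub_add_cancel]
        _ ≤ ‖B₂ - A₂‖ + ‖A₂‖ := norm_add_le _ _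
        _ ≤ ε₂ + ‖A₂‖ := by exact add_le_add_left hE₂ _
        _ = ‖A₂‖ + ε₂ := add_comm _ _
    calc ‖B₁ ⊗ₖ B₂ - A₁ ⊗ₖ A₂‖
        ≤ ‖(B₁ - A₁) ⊗ₖ B₂‖ + ‖A₁ ⊗ₖ (B₂ - A₂)‖ := by rw [hsplit]; exact norm_add_le _ _
      _ ≤ ‖B₁ - A₁‖ * ‖B₂‖ + ‖A₁‖ * ‖B₂ - A₂‖ :=
          add_le_add (l2_opNorm_kron _ _) (l2_opNorm_kron _ _)
      _ ≤ ε₁ * (‖A₂‖ + ε₂) + ‖A₁‖ * ε₂ := by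
          refine add_le_add ?_ ?_
          · exact mul_le_mul hE₁ hB₂n (norm_nonneg _) hε₁.le
          · exact mul_le_mul_of_nonneg_left hE₂ (norm_nonneg _)
      _ = ‖A₁‖ * ε₂ + ‖A₂‖ * ε₁ + ε₁ * ε₂ := by ring
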